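/- Let Π_Y(t; x, y) := Σ_{k∈ℤ} [ G_t(x − 2bk + y) + G_t(x − 2bk − y) ] where G_t(x) = e^{−x²/(2t)}/√(2πt) is the Gaussian kernel and b > 0 is fixed. Then there exist constants 0 < c < C such that for all t ∈ (0,1]: (i) inf_{x∈(0,b)} Π_Y(t; x, x) ≥ c t^{−1/2}, and (ii) sup_{(x,y)∈(0,b)²} Π_Y(t; x, y) ≤ C t^{−1/2}. -/
import Mathlib

open MeasureTheory Real

/-- The Gaussian (heat) kernel on `ℝ`. -/
noncomputable def gaussKer (t x : ℝ) : ℝ := Real.exp (-x ^ 2 / (2 * t)) / Real.sqrt (2 * π * t)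

/-- The transition kernel of reflected Brownian motion on the interval `(0,b)`. -/
noncomputable def PiY (b t x y : ℝ) : ℝ :=
  ∑' k : ℤ, (gaussKer t (x - 2 * b * k + y) + gaussKer t (x - 2 * b * k - y))

lemma gaussKer_nonneg (t x : ℝ) : 0 ≤ gaussKer t x :=
  div_nonneg (Real.exp_nonneg _) (Real.sqrt_nonneg _)

lemma summable_natAbs_pow {r : ℝ} (hr0 : 0 ≤ r) (hr1 : r < 1) :
    Summable (fun k : ℤ => r ^ k.natAbs) := by
  apply Summable.of_nat_of_neg
  · simpa using summable_geometric_of_lt_one hr0 hr1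
  · simpa using summable_geometric_of_lt_one hr0 hr1

lemma natAbs_le_sq (k : ℤ) : ((k.natAbs : ℝ)) ≤ (k : ℝ) ^ 2 := by
  have h1 : ((k.natAbs : ℝ)) ^ 2 = (k : ℝ) ^ 2 := by
    push_cast [Nat.cast_natAbs]; rw [sq_abs]
  have h2 : (k.natAbs : ℝ) ≤ ((k.natAbs : ℝ)) ^ 2 := by
    have := Nat.le_self_pow (two_ne_zero) k.natAbs
    exact_mod_cast this
  linarith

/-- Pointwise Gaussian bound for `t ∈ (0,1]` and `|u| ≤ 2b`. -/
lemma gaussKer_le (b t u : ℝ) (hb : 0 < b) (ht : t ∈ Set.Ioc (0:ℝ) 1)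
    (hu : |u| ≤ 2 * b) (k : ℤ) :
    gaussKer t (u - 2 * b * k) ≤
      (Real.sqrt (2 * π * t))⁻¹ * (Real.exp (2 * b ^ 2) * Real.exp (-b ^ 2) ^ k.natAbs) := by
  rw [gaussKer, div_eq_inv_mul]
  apply mul_le_mul_of_nonneg_left _ (inv_nonneg.2 (Real.sqrt_nonneg _))
  rw [← Real.exp_nat_mul, ← Real.exp_add]
  apply Real.exp_le_exp.2
  have hz2 : (0:ℝ) ≤ (u - 2 * b * k) ^ 2 := sq_nonneg _
  have h1 : -(u - 2 * b * k) ^ 2 / (2 * t) ≤ -(u - 2 * b * k) ^ 2 / 2 := by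
    rw [div_le_div_iff₀ (by linarith [ht.1]) (by norm_num)]
    nlinarith [ht.1, ht.2]
  have habs : u ^ 2 ≤ 4 * b ^ 2 := by
    nlinarith [abs_nonneg u, sq_abs u]
  have hk : (k.natAbs : ℝ) ≤ (k:ℝ)^2 := natAbs_le_sq k
  have h2 : -(u - 2 * b * k) ^ 2 / 2 ≤ 2 * b ^ 2 + (k.natAbs : ℝ) * (-b ^ 2) := by
    nlinarith [sq_nonneg (2 * u - 2 * b * k), sq_nonneg ((k:ℝ)^2 - (k.natAbs:ℝ)), hb]
  linarith

theorem interval_transition_density_bounds (b : ℝ) (hb : 0 < b) :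
    ∃ c C : ℝ, 0 < c ∧ c < C ∧ ∀ t ∈ Set.Ioc (0 : ℝ) 1,
      (∀ x ∈ Set.Ioo (0 : ℝ) b, c * t ^ (-(1/2) : ℝ) ≤ PiY b t x x) ∧
      (∀ x ∈ Set.Ioo (0 : ℝ) b, ∀ y ∈ Set.Ioo (0 : ℝ) b,
        PiY b t x y ≤ C * t ^ (-(1/2) : ℝ)) := by
  have hπ : (0:ℝ) < 2 * π := by positivity
  set r : ℝ := Real.exp (-b ^ 2) with hr
  have hr0 : 0 ≤ r := Real.exp_nonneg _
  have hr1 : r < 1 := Real.exp_lt_one_iff.2 (by nlinarith)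
  have hS : Summable (fun k : ℤ => r ^ k.natAbs) := summable_natAbs_pow hr0 hr1
  set S : ℝ := ∑' k : ℤ, r ^ k.natAbs with hSdef
  have hS1 : (1:ℝ) ≤ S := by
    have := Summable.le_tsum hS 0 (fun j _ => pow_nonneg hr0 _)
    simpa using this
  refine ⟨(Real.sqrt (2 * π))⁻¹, (Real.sqrt (2 * π))⁻¹ * (2 * Real.exp (2 * b ^ 2) * S), ?_, ?_, ?_⟩
  · positivity
  · have h1 : (1:ℝ) < 2 * Real.exp (2 * b ^ 2) * S := by
      nlinarith [Real.one_le_exp (by positivity : (0:ℝ) ≤ 2 * b ^ 2)]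
    nth_rewrite 1 [← mul_one ((Real.sqrt (2 * π))⁻¹)]
    exact mul_lt_mul_of_pos_left h1 (by positivity)
  intro t ht
  have ht0 := ht.1
  -- rewrite t ^ (-(1/2))
  have hrpow : t ^ (-(1/2) : ℝ) = (Real.sqrt t)⁻¹ := by
    rw [Real.rpow_neg ht0.le, Real.sqrt_eq_rpow]
  have hsqrt : Real.sqrt (2 * π * t) = Real.sqrt (2 * π) * Real.sqrt t := by
    rw [Real.sqrt_mul hπ.le]
  have hinv : (Real.sqrt (2 * π * t))⁻¹ = (Real.sqrt (2 * π))⁻¹ * t ^ (-(1/2) : ℝ) := by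
    rw [hsqrt, mul_inv, hrpow]
  constructor
  · -- lower bound
    intro x hx
    have key0 : ∀ k : ℤ, gaussKer t (x - 2 * b * k + x) + gaussKer t (x - 2 * b * k - x) ≤
        (Real.sqrt (2 * π * t))⁻¹ * 2 * (Real.exp (2 * b ^ 2) * r ^ k.natAbs) := by
      intro k
      have h1 : x - 2 * b * k + x = (x + x) - 2 * b * k := by ring
      have h2 : x - 2 * b * k - x = (0:ℝ) - 2 * b * k := by ring
      have e1 := gaussKer_le b t (x + x) hb ht (by rw [abs_of_nonneg (by linarith [hx.1])]; linarith [hx.2]) k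
      have e2 := gaussKer_le b t 0 hb ht (by simp; positivity) k
      rw [h1, h2]
      calc gaussKer t (x + x - 2 * b * k) + gaussKer t (0 - 2 * b * k) ≤ _ := add_le_add e1 e2
        _ = (Real.sqrt (2 * π * t))⁻¹ * 2 * (Real.exp (2 * b ^ 2) * r ^ k.natAbs) := by ring
    have hsum : Summable (fun k : ℤ =>
        gaussKer t (x - 2 * b * k + x) + gaussKer t (x - 2 * b * k - x)) :=
      Summable.of_nonneg_of_le
        (fun k => add_nonneg (gaussKer_nonneg _ _) (gaussKer_nonneg _ _))
        key0 ((hS.mul_left _).mul_left ((Real.sqrt (2 * π * t))⁻¹ * 2))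
    have hle := Summable.le_tsum hsum 0
      (fun j _ => add_nonneg (gaussKer_nonneg _ _) (gaussKer_nonneg _ _))
    have h0 : gaussKer t (x - 2 * b * (0:ℤ) - x) = (Real.sqrt (2 * π * t))⁻¹ := by
      have : x - 2 * b * ((0:ℤ):ℝ) - x = 0 := by push_cast; ring
      rw [gaussKer, this]
      norm_num
    calc (Real.sqrt (2 * π))⁻¹ * t ^ (-(1/2) : ℝ) = (Real.sqrt (2 * π * t))⁻¹ := hinv.symm
      _ = gaussKer t (x - 2 * b * (0:ℤ) - x) := h0.symm
      _ ≤ gaussKer t (x - 2 * b * (0:ℤ) + x) + gaussKer t (x - 2 * b * (0:ℤ) - x) := by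
          linarith [gaussKer_nonneg t (x - 2 * b * ((0:ℤ):ℝ) + x)]
      _ ≤ PiY b t x x := hle
  · -- upper bound
    intro x hx y hy
    have hxy1 : |x + y| ≤ 2 * b := by
      rw [abs_of_nonneg (by linarith [hx.1, hy.1])]; linarith [hx.2, hy.2]
    have hxy2 : |x - y| ≤ 2 * b := by
      rw [abs_le]; constructor <;> · linarith [hx.1, hx.2, hy.1, hy.2]
    have key : ∀ k : ℤ,
        gaussKer t (x - 2 * b * k + y) + gaussKer t (x - 2 * b * k - y) ≤
          (Real.sqrt (2 * π * t))⁻¹ * 2 * (Real.exp (2 * b ^ 2) * r ^ k.natAbs) := by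
      intro k
      have h1 : x - 2 * b * k + y = (x + y) - 2 * b * k := by ring
      have h2 : x - 2 * b * k - y = (x - y) - 2 * b * k := by ring
      have e1 := gaussKer_le b t (x + y) hb ht hxy1 k
      have e2 := gaussKer_le b t (x - y) hb ht hxy2 k
      rw [h1, h2]
      calc gaussKer t (x + y - 2 * b * k) + gaussKer t (x - y - 2 * b * k) ≤ _ := add_le_add e1 e2
        _ = (Real.sqrt (2 * π * t))⁻¹ * 2 * (Real.exp (2 * b ^ 2) * r ^ k.natAbs) := by ring
    have hsumB : Summable (fun k : ℤ =>
        (Real.sqrt (2 * π * t))⁻¹ * 2 * (Real.exp (2 * b ^ 2) * r ^ k.natAbs)) :=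
      (hS.mul_left _).mul_left _
    have hsum : Summable (fun k : ℤ =>
        gaussKer t (x - 2 * b * k + y) + gaussKer t (x - 2 * b * k - y)) :=
      Summable.of_nonneg_of_le
        (fun k => add_nonneg (gaussKer_nonneg _ _) (gaussKer_nonneg _ _)) key hsumB
    have hbound : PiY b t x y ≤
        ∑' k : ℤ, (Real.sqrt (2 * π * t))⁻¹ * 2 * (Real.exp (2 * b ^ 2) * r ^ k.natAbs) :=
      Summable.tsum_le_tsum key hsum hsumB
    have htsum : ∑' k : ℤ, (Real.sqrt (2 * π * t))⁻¹ * 2 * (Real.exp (2 * b ^ 2) * r ^ k.natAbs)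
        = (Real.sqrt (2 * π * t))⁻¹ * 2 * (Real.exp (2 * b ^ 2) * S) := by
      rw [tsum_mul_left, tsum_mul_left]
    rw [htsum, hinv] at hbound
    calc PiY b t x y ≤ _ := hbound
      _ = (Real.sqrt (2 * π))⁻¹ * (2 * Real.exp (2 * b ^ 2) * S) * t ^ (-(1/2) : ℝ) := by ring
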